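/- Let Ω ⊆ ℝ² be open, ν : Ω → ℝ, and let f : Ω → ℝ be a positive twice continuously differentiable solution of f_xx − f_tt = νf on Ω. Let W = u + jv : Ω → 𝔻 be twice continuously differentiable and satisfy the main Vekua equation W_z̄ = (f_z̄/f)·W̄ on Ω. Then u = Re W satisfies the Klein-Gordon equation u_xx − u_tt = νu on Ω, and v = Im W satisfies v_xx − v_tt = ηv on Ω, where η = −ν + 8|f_z|²/f² = −ν + 2(f_x² − f_t²)/f². -/

import Mathlib

noncomputable section

open Filter Topology MeasureTheory

/-- Hyperbolic (duplex) numbers 𝔻, modeled as pairs `(Re z, Im z)` with `j ^ 2 = 1`. -/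
abbrev Hyp : Type := ℝ × ℝ

/-- Real part of a hyperbolic number. -/
def hre (a : Hyp) : ℝ := a.1

/-- Imaginary part of a hyperbolic number. -/
def him (a : Hyp) : ℝ := a.2

/-- The hyperbolic imaginary unit `j`. -/
def hj : Hyp := (0, 1)

/-- Hyperbolic multiplication: `(x+tj)(x'+t'j) = (xx'+tt') + (xt'+tx')j`. -/
def hmul (a b : Hyp) : Hyp := (a.1 * b.1 + a.2 * b.2, a.1 * b.2 + a.2 * b.1)

/-- Hyperbolic conjugation: `conj (x+tj) = x - tj`. -/
def hconj (a : Hyp) : Hyp := (a.1, -a.2)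

/-- Invertibility of a hyperbolic number: `x² ≠ t²`. -/
def IsInv (a : Hyp) : Prop := a.1 ^ 2 ≠ a.2 ^ 2

/-- Hyperbolic inverse `z⁻¹ = z̄ / |z|²` with `|z|² = x² - t²`. -/
def hinv (a : Hyp) : Hyp := (a.1 / (a.1 ^ 2 - a.2 ^ 2), -a.2 / (a.1 ^ 2 - a.2 ^ 2))

/-- Hyperbolic division. -/
def hdiv (a b : Hyp) : Hyp := hmul a (hinv b)

/-- Partial derivative in the first (`x`) variable. -/
def pdx (g : Hyp → ℝ) (p : Hyp) : ℝ := deriv (fun s => g (s, p.2)) p.1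

/-- Partial derivative in the second (`t`) variable. -/
def pdt (g : Hyp → ℝ) (p : Hyp) : ℝ := deriv (fun s => g (p.1, s)) p.2

/-- The wave operator `□g = g_xx - g_tt`. -/
def waveOp (g : Hyp → ℝ) (p : Hyp) : ℝ := pdx (pdx g) p - pdt (pdt g) p

/-- `w_z = ½(∂_x + j ∂_t) w = ½((u_x+v_t) + (v_x+u_t)j)` for a 𝔻-valued `w = u + jv`. -/
def dz (w : Hyp → Hyp) (p : Hyp) : Hyp :=
  ((pdx (fun q => (w q).1) p + pdt (fun q => (w q).2) p) / 2,
   (pdx (fun q => (w q).2) p + pdt (fun q => (w q).1) p) / 2)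

/-- `w_z̄ = ½(∂_x - j ∂_t) w = ½((u_x-v_t) + (v_x-u_t)j)` for a 𝔻-valued `w = u + jv`. -/
def dzbar (w : Hyp → Hyp) (p : Hyp) : Hyp :=
  ((pdx (fun q => (w q).1) p - pdt (fun q => (w q).2) p) / 2,
   (pdx (fun q => (w q).2) p - pdt (fun q => (w q).1) p) / 2)

/-- `f_z = ½(f_x + j f_t)` for a real-valued `f`. -/
def rz (f : Hyp → ℝ) (p : Hyp) : Hyp := (pdx f p / 2, pdt f p / 2)

/-- `f_z̄ = ½(f_x - j f_t)` for a real-valued `f`. -/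
def rzbar (f : Hyp → ℝ) (p : Hyp) : Hyp := (pdx f p / 2, -(pdt f p) / 2)

/-- 𝔻-differentiability at `z₀`: the difference quotient `(f z - f z₀)·(z - z₀)⁻¹`
tends to `d` as `z → z₀` through points with `z - z₀` invertible. -/
def HasHDerivAt (f : Hyp → Hyp) (d : Hyp) (z₀ : Hyp) : Prop :=
  Filter.Tendsto (fun z => hmul (f z - f z₀) (hinv (z - z₀)))
    (nhdsWithin z₀ {z | IsInv (z - z₀)}) (nhds d)

/-- `F Ḡ - F̄ G`. -/
def pairDenom (F G : Hyp → Hyp) (z : Hyp) : Hyp :=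
  hmul (F z) (hconj (G z)) - hmul (hconj (F z)) (G z)

/-- Characteristic coefficient `a_(F,G) = -(F̄ G_z̄ - F_z̄ Ḡ)/(F Ḡ - F̄ G)`. -/
def aFG (F G : Hyp → Hyp) (z : Hyp) : Hyp :=
  - hdiv (hmul (hconj (F z)) (dzbar G z) - hmul (dzbar F z) (hconj (G z))) (pairDenom F G z)

/-- Characteristic coefficient `b_(F,G) = (F G_z̄ - F_z̄ G)/(F Ḡ - F̄ G)`. -/
def bFG (F G : Hyp → Hyp) (z : Hyp) : Hyp :=
  hdiv (hmul (F z) (dzbar G z) - hmul (dzbar F z) (G z)) (pairDenom F G z)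

/-- Characteristic coefficient `A_(F,G) = -(F̄ G_z - F_z Ḡ)/(F Ḡ - F̄ G)`. -/
def AFG (F G : Hyp → Hyp) (z : Hyp) : Hyp :=
  - hdiv (hmul (hconj (F z)) (dz G z) - hmul (dz F z) (hconj (G z))) (pairDenom F G z)

/-- Characteristic coefficient `B_(F,G) = (F G_z - F_z G)/(F Ḡ - F̄ G)`. -/
def BFG (F G : Hyp → Hyp) (z : Hyp) : Hyp :=
  hdiv (hmul (F z) (dz G z) - hmul (dz F z) (G z)) (pairDenom F G z)

/-- A generating pair on `Ω`: twice continuously differentiable `F, G` with `Im(F̄G) ≠ 0`. -/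
def IsGenPair (F G : Hyp → Hyp) (Ω : Set Hyp) : Prop :=
  ContDiffOn ℝ 2 F Ω ∧ ContDiffOn ℝ 2 G Ω ∧ ∀ z ∈ Ω, him (hmul (hconj (F z)) (G z)) ≠ 0

/-- The idempotent `e₁ = (1+j)/2`. -/
def e1 : Hyp := (1/2, 1/2)

/-- The idempotent `e₂ = (1-j)/2`. -/
def e2 : Hyp := (1/2, -1/2)

/-- Contour integral `∮_{∂R} h dz` over the counterclockwise boundary of the rectangle
`[x₁,x₂] × [t₁,t₂]`, with hyperbolic multiplication (`dz = dx` on horizontal sides,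
`dz = j dt` on vertical sides). -/
def rectContourInt (h : Hyp → Hyp) (x₁ x₂ t₁ t₂ : ℝ) : Hyp :=
  ((∫ x in x₁..x₂, h (x, t₁)) - ∫ x in x₁..x₂, h (x, t₂)) +
    hmul hj ((∫ t in t₁..t₂, h (x₂, t)) - ∫ t in t₁..t₂, h (x₁, t))

/-- Integral `∫_{[z₀,z]} h dζ` along the straight segment from `z₀` to `z`,
with hyperbolic multiplication. -/
def segInt (h : Hyp → Hyp) (z₀ z : Hyp) : Hyp :=
  ∫ s in (0:ℝ)..1, hmul (h (z₀ + s • (z - z₀))) (z - z₀)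

/-- Natural powers in 𝔻. -/
def hpow (a : Hyp) : ℕ → Hyp
  | 0 => (1, 0)
  | n + 1 => hmul a (hpow a n)

/-- Integer powers in 𝔻 (for invertible base). -/
def hzpow (a : Hyp) : ℤ → Hyp
  | Int.ofNat n => hpow a n
  | Int.negSucc n => hinv (hpow a (n + 1))

/-- Directional derivative in direction `(1,0)`. -/
def D1 (g : Hyp → ℝ) (q : Hyp) : ℝ := fderiv ℝ g q ((1:ℝ), (0:ℝ))

/-- Directional derivative in direction `(0,1)`. -/
def D2 (g : Hyp → ℝ) (q : Hyp) : ℝ := fderiv ℝ g q ((0:ℝ), (1:ℝ))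

lemma pdx_fderiv {g : Hyp → ℝ} {p : Hyp} (hg : DifferentiableAt ℝ g p) :
    pdx g p = D1 g p := by
  have h1 : HasDerivAt (fun s : ℝ => ((s, p.2) : Hyp)) (((1:ℝ), (0:ℝ)) : Hyp) p.1 :=
    (hasDerivAt_id p.1).prodMk (hasDerivAt_const p.1 p.2)
  have h2 := hg.hasFDerivAt.comp_hasDerivAt p.1 h1
  exact h2.deriv

lemma pdt_fderiv {g : Hyp → ℝ} {p : Hyp} (hg : DifferentiableAt ℝ g p) :
    pdt g p = D2 g p := by
  have h1 : HasDerivAt (fun s : ℝ => ((p.1, s) : Hyp)) (((0:ℝ), (1:ℝ)) : Hyp) p.2 :=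
    (hasDerivAt_const p.2 p.1).prodMk (hasDerivAt_id p.2)
  have h2 := hg.hasFDerivAt.comp_hasDerivAt p.2 h1
  exact h2.deriv

lemma pdx_congr {g₁ g₂ : Hyp → ℝ} {p : Hyp} (h : g₁ =ᶠ[nhds p] g₂) :
    pdx g₁ p = pdx g₂ p := by
  apply Filter.EventuallyEq.deriv_eq
  have hcont : Continuous (fun s : ℝ => ((s, p.2) : Hyp)) := by fun_prop
  exact (hcont.tendsto p.1).eventually h

lemma pdt_congr {g₁ g₂ : Hyp → ℝ} {p : Hyp} (h : g₁ =ᶠ[nhds p] g₂) :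
    pdt g₁ p = pdt g₂ p := by
  apply Filter.EventuallyEq.deriv_eq
  have hcont : Continuous (fun s : ℝ => ((p.1, s) : Hyp)) := by fun_prop
  exact (hcont.tendsto p.2).eventually h

lemma diff_Dw {Ω : Set Hyp} (hΩ : IsOpen Ω) {g : Hyp → ℝ} (hg : ContDiffOn ℝ 2 g Ω)
    {q : Hyp} (hq : q ∈ Ω) (w : Hyp) :
    DifferentiableAt ℝ (fun r => fderiv ℝ g r w) q := by
  have h1 : ContDiffAt ℝ 2 g q := hg.contDiffAt (hΩ.mem_nhds hq)
  have h2 : ContDiffAt ℝ 1 (fderiv ℝ g) q := h1.fderiv_right (by norm_num)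
  exact (h2.differentiableAt one_ne_zero).clm_apply (differentiableAt_const w)

lemma diff_D1 {Ω : Set Hyp} (hΩ : IsOpen Ω) {g : Hyp → ℝ} (hg : ContDiffOn ℝ 2 g Ω)
    {q : Hyp} (hq : q ∈ Ω) : DifferentiableAt ℝ (D1 g) q := diff_Dw hΩ hg hq _

lemma diff_D2 {Ω : Set Hyp} (hΩ : IsOpen Ω) {g : Hyp → ℝ} (hg : ContDiffOn ℝ 2 g Ω)
    {q : Hyp} (hq : q ∈ Ω) : DifferentiableAt ℝ (D2 g) q := diff_Dw hΩ hg hq _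

lemma fderiv_Dw {Ω : Set Hyp} (hΩ : IsOpen Ω) {g : Hyp → ℝ} (hg : ContDiffOn ℝ 2 g Ω)
    {q : Hyp} (hq : q ∈ Ω) (w w' : Hyp) :
    fderiv ℝ (fun r => fderiv ℝ g r w) q w' = fderiv ℝ (fderiv ℝ g) q w' w := by
  have h1 : ContDiffAt ℝ 2 g q := hg.contDiffAt (hΩ.mem_nhds hq)
  have h2 : ContDiffAt ℝ 1 (fderiv ℝ g) q := h1.fderiv_right (by norm_num)
  have hd : DifferentiableAt ℝ (fderiv ℝ g) q := h2.differentiableAt one_ne_zero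
  have he : HasFDerivAt (fun r => fderiv ℝ g r w)
      ((ContinuousLinearMap.apply ℝ ℝ w).comp (fderiv ℝ (fderiv ℝ g) q)) q :=
    (ContinuousLinearMap.apply ℝ ℝ w).hasFDerivAt.comp q hd.hasFDerivAt
  rw [he.fderiv]
  rfl

lemma symm_D {Ω : Set Hyp} (hΩ : IsOpen Ω) {g : Hyp → ℝ} (hg : ContDiffOn ℝ 2 g Ω)
    {q : Hyp} (hq : q ∈ Ω) :
    fderiv ℝ (D1 g) q ((0:ℝ), (1:ℝ)) = fderiv ℝ (D2 g) q ((1:ℝ), (0:ℝ)) := by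
  have h1 : ContDiffAt ℝ 2 g q := hg.contDiffAt (hΩ.mem_nhds hq)
  have h2 : ContDiffAt ℝ 1 (fderiv ℝ g) q := h1.fderiv_right (by norm_num)
  have hd : DifferentiableAt ℝ (fderiv ℝ g) q := h2.differentiableAt one_ne_zero
  have hev : ∀ᶠ y in nhds q, HasFDerivAt g (fderiv ℝ g y) y := by
    filter_upwards [hΩ.mem_nhds hq] with y hy
    exact ((hg.contDiffAt (hΩ.mem_nhds hy)).differentiableAt two_ne_zero).hasFDerivAt
  have hsymm := second_derivative_symmetric_of_eventually hev hd.hasFDerivAt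
    (((0:ℝ), (1:ℝ)) : Hyp) (((1:ℝ), (0:ℝ)) : Hyp)
  rw [show D1 g = fun r => fderiv ℝ g r ((1:ℝ), (0:ℝ)) from rfl,
    show D2 g = fun r => fderiv ℝ g r ((0:ℝ), (1:ℝ)) from rfl,
    fderiv_Dw hΩ hg hq, fderiv_Dw hΩ hg hq]
  exact hsymm

lemma waveOp_fderiv {Ω : Set Hyp} (hΩ : IsOpen Ω) {g : Hyp → ℝ} (hg : ContDiffOn ℝ 2 g Ω)
    {q : Hyp} (hq : q ∈ Ω) :
    waveOp g q = fderiv ℝ (D1 g) q ((1:ℝ), (0:ℝ)) - fderiv ℝ (D2 g) q ((0:ℝ), (1:ℝ)) := by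
  have hev1 : pdx g =ᶠ[nhds q] D1 g := by
    filter_upwards [hΩ.mem_nhds hq] with y hy
    exact pdx_fderiv ((hg.contDiffAt (hΩ.mem_nhds hy)).differentiableAt two_ne_zero)
  have hev2 : pdt g =ᶠ[nhds q] D2 g := by
    filter_upwards [hΩ.mem_nhds hq] with y hy
    exact pdt_fderiv ((hg.contDiffAt (hΩ.mem_nhds hy)).differentiableAt two_ne_zero)
  have h1 := pdx_fderiv (p := q) (diff_D1 hΩ hg hq)
  have h2 := pdt_fderiv (p := q) (diff_D2 hΩ hg hq)
  rw [waveOp, pdx_congr hev1, pdt_congr hev2, h1, h2]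
  rfl

lemma fderiv_mul_apply' {a b : Hyp → ℝ} {p w : Hyp} (ha : DifferentiableAt ℝ a p)
    (hb : DifferentiableAt ℝ b p) :
    fderiv ℝ (fun q => a q * b q) p w = fderiv ℝ a p w * b p + a p * fderiv ℝ b p w := by
  rw [fderiv_fun_mul ha hb]
  simp [ContinuousLinearMap.add_apply, ContinuousLinearMap.smul_apply, smul_eq_mul]
  ring

lemma fderiv_add_apply' {a b : Hyp → ℝ} {p w : Hyp} (ha : DifferentiableAt ℝ a p)
    (hb : DifferentiableAt ℝ b p) :
    fderiv ℝ (fun q => a q + b q) p w = fderiv ℝ a p w + fderiv ℝ b p w := by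
  rw [fderiv_fun_add ha hb]; rfl

lemma fderiv_sub_apply' {a b : Hyp → ℝ} {p w : Hyp} (ha : DifferentiableAt ℝ a p)
    (hb : DifferentiableAt ℝ b p) :
    fderiv ℝ (fun q => a q - b q) p w = fderiv ℝ a p w - fderiv ℝ b p w := by
  rw [fderiv_fun_sub ha hb]; rfl

lemma fderiv_neg_apply' {a : Hyp → ℝ} {p w : Hyp} :
    fderiv ℝ (fun q => -(a q)) p w = -(fderiv ℝ a p w) := by
  rw [fderiv_fun_neg]; rfl


lemma keyLemma (Ω : Set Hyp) (hΩ : IsOpen Ω) (ν f u v : Hyp → ℝ)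
    (hf : ContDiffOn ℝ 2 f Ω) (hfpos : ∀ p ∈ Ω, 0 < f p)
    (hKG : ∀ p ∈ Ω, waveOp f p = ν p * f p)
    (hu : ContDiffOn ℝ 2 u Ω) (hv : ContDiffOn ℝ 2 v Ω)
    (eq1 : ∀ q ∈ Ω, f q * (pdx u q - pdt v q) = pdx f q * u q + pdt f q * v q)
    (eq2 : ∀ q ∈ Ω, f q * (pdx v q - pdt u q) = -(pdx f q * v q + pdt f q * u q))
    {p : Hyp} (hp : p ∈ Ω) :
    waveOp u p = ν p * u p ∧
      waveOp v p = (-ν p + 2 * ((pdx f p) ^ 2 - (pdt f p) ^ 2) / (f p) ^ 2) * v p := by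
  have hmem : Ω ∈ nhds p := hΩ.mem_nhds hp
  have hdf : ∀ q ∈ Ω, DifferentiableAt ℝ f q := fun q hq =>
    (hf.contDiffAt (hΩ.mem_nhds hq)).differentiableAt two_ne_zero
  have hdu : ∀ q ∈ Ω, DifferentiableAt ℝ u q := fun q hq =>
    (hu.contDiffAt (hΩ.mem_nhds hq)).differentiableAt two_ne_zero
  have hdv : ∀ q ∈ Ω, DifferentiableAt ℝ v q := fun q hq =>
    (hv.contDiffAt (hΩ.mem_nhds hq)).differentiableAt two_ne_zero
  have hf0 : f p ≠ 0 := (hfpos p hp).ne'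
  have eq1' : ∀ q ∈ Ω, f q * (D1 u q - D2 v q) = D1 f q * u q + D2 f q * v q := by
    intro q hq
    rw [← pdx_fderiv (hdu q hq), ← pdt_fderiv (hdv q hq), ← pdx_fderiv (hdf q hq),
      ← pdt_fderiv (hdf q hq)]
    exact eq1 q hq
  have eq2' : ∀ q ∈ Ω, f q * (D1 v q - D2 u q) = -(D1 f q * v q + D2 f q * u q) := by
    intro q hq
    rw [← pdx_fderiv (hdv q hq), ← pdt_fderiv (hdu q hq), ← pdx_fderiv (hdf q hq),
      ← pdt_fderiv (hdf q hq)]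
    exact eq2 q hq
  have E1 : (fun q => f q * (D1 u q - D2 v q)) =ᶠ[nhds p]
      fun q => D1 f q * u q + D2 f q * v q := by
    filter_upwards [hmem] with q hq; exact eq1' q hq
  have E2 : (fun q => f q * (D1 v q - D2 u q)) =ᶠ[nhds p]
      fun q => -(D1 f q * v q + D2 f q * u q) := by
    filter_upwards [hmem] with q hq; exact eq2' q hq
  have dfp := hdf p hp
  have dup := hdu p hp
  have dvp := hdv p hp
  have dD1u : DifferentiableAt ℝ (D1 u) p := diff_D1 hΩ hu hp
  have dD2u : DifferentiableAt ℝ (D2 u) p := diff_D2 hΩ hu hp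
  have dD1v : DifferentiableAt ℝ (D1 v) p := diff_D1 hΩ hv hp
  have dD2v : DifferentiableAt ℝ (D2 v) p := diff_D2 hΩ hv hp
  have dD1f : DifferentiableAt ℝ (D1 f) p := diff_D1 hΩ hf hp
  have dD2f : DifferentiableAt ℝ (D2 f) p := diff_D2 hΩ hf hp
  have lhs1 : ∀ w : Hyp, fderiv ℝ (fun q => f q * (D1 u q - D2 v q)) p w =
      fderiv ℝ f p w * (D1 u p - D2 v p) +
        f p * (fderiv ℝ (D1 u) p w - fderiv ℝ (D2 v) p w) := by
    intro w
    rw [fderiv_mul_apply' (b := fun q => D1 u q - D2 v q) dfp (dD1u.sub dD2v), fderiv_sub_apply' dD1u dD2v]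
  have lhs2 : ∀ w : Hyp, fderiv ℝ (fun q => f q * (D1 v q - D2 u q)) p w =
      fderiv ℝ f p w * (D1 v p - D2 u p) +
        f p * (fderiv ℝ (D1 v) p w - fderiv ℝ (D2 u) p w) := by
    intro w
    rw [fderiv_mul_apply' (b := fun q => D1 v q - D2 u q) dfp (dD1v.sub dD2u), fderiv_sub_apply' dD1v dD2u]
  have rhs1 : ∀ w : Hyp, fderiv ℝ (fun q => D1 f q * u q + D2 f q * v q) p w =
      (fderiv ℝ (D1 f) p w * u p + D1 f p * fderiv ℝ u p w) +
        (fderiv ℝ (D2 f) p w * v p + D2 f p * fderiv ℝ v p w) := by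
    intro w
    rw [fderiv_add_apply' (a := fun q => D1 f q * u q) (b := fun q => D2 f q * v q) (dD1f.mul dup) (dD2f.mul dvp), fderiv_mul_apply' dD1f dup,
      fderiv_mul_apply' dD2f dvp]
  have rhs2 : ∀ w : Hyp, fderiv ℝ (fun q => -(D1 f q * v q + D2 f q * u q)) p w =
      -((fderiv ℝ (D1 f) p w * v p + D1 f p * fderiv ℝ v p w) +
        (fderiv ℝ (D2 f) p w * u p + D2 f p * fderiv ℝ u p w)) := by
    intro w
    rw [fderiv_neg_apply', fderiv_add_apply' (a := fun q => D1 f q * v q) (b := fun q => D2 f q * u q) (dD1f.mul dvp) (dD2f.mul dup),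
      fderiv_mul_apply' dD1f dvp, fderiv_mul_apply' dD2f dup]
  have hA : D1 f p * (D1 u p - D2 v p) +
      f p * (fderiv ℝ (D1 u) p ((1:ℝ), (0:ℝ)) - fderiv ℝ (D2 v) p ((1:ℝ), (0:ℝ))) =
      (fderiv ℝ (D1 f) p ((1:ℝ), (0:ℝ)) * u p + D1 f p * D1 u p) +
        (fderiv ℝ (D2 f) p ((1:ℝ), (0:ℝ)) * v p + D2 f p * D1 v p) := by
    have h : fderiv ℝ (fun q => f q * (D1 u q - D2 v q)) p ((1:ℝ), (0:ℝ)) =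
        fderiv ℝ (fun q => D1 f q * u q + D2 f q * v q) p ((1:ℝ), (0:ℝ)) := by
      rw [E1.fderiv_eq]
    rw [lhs1, rhs1] at h
    exact h
  have hD : D2 f p * (D1 u p - D2 v p) +
      f p * (fderiv ℝ (D1 u) p ((0:ℝ), (1:ℝ)) - fderiv ℝ (D2 v) p ((0:ℝ), (1:ℝ))) =
      (fderiv ℝ (D1 f) p ((0:ℝ), (1:ℝ)) * u p + D1 f p * D2 u p) +
        (fderiv ℝ (D2 f) p ((0:ℝ), (1:ℝ)) * v p + D2 f p * D2 v p) := by
    have h : fderiv ℝ (fun q => f q * (D1 u q - D2 v q)) p ((0:ℝ), (1:ℝ)) =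
        fderiv ℝ (fun q => D1 f q * u q + D2 f q * v q) p ((0:ℝ), (1:ℝ)) := by
      rw [E1.fderiv_eq]
    rw [lhs1, rhs1] at h
    exact h
  have hC : D1 f p * (D1 v p - D2 u p) +
      f p * (fderiv ℝ (D1 v) p ((1:ℝ), (0:ℝ)) - fderiv ℝ (D2 u) p ((1:ℝ), (0:ℝ))) =
      -((fderiv ℝ (D1 f) p ((1:ℝ), (0:ℝ)) * v p + D1 f p * D1 v p) +
        (fderiv ℝ (D2 f) p ((1:ℝ), (0:ℝ)) * u p + D2 f p * D1 u p)) := by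
    have h : fderiv ℝ (fun q => f q * (D1 v q - D2 u q)) p ((1:ℝ), (0:ℝ)) =
        fderiv ℝ (fun q => -(D1 f q * v q + D2 f q * u q)) p ((1:ℝ), (0:ℝ)) := by
      rw [E2.fderiv_eq]
    rw [lhs2, rhs2] at h
    exact h
  have hB : D2 f p * (D1 v p - D2 u p) +
      f p * (fderiv ℝ (D1 v) p ((0:ℝ), (1:ℝ)) - fderiv ℝ (D2 u) p ((0:ℝ), (1:ℝ))) =
      -((fderiv ℝ (D1 f) p ((0:ℝ), (1:ℝ)) * v p + D1 f p * D2 v p) +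
        (fderiv ℝ (D2 f) p ((0:ℝ), (1:ℝ)) * u p + D2 f p * D2 u p)) := by
    have h : fderiv ℝ (fun q => f q * (D1 v q - D2 u q)) p ((0:ℝ), (1:ℝ)) =
        fderiv ℝ (fun q => -(D1 f q * v q + D2 f q * u q)) p ((0:ℝ), (1:ℝ)) := by
      rw [E2.fderiv_eq]
    rw [lhs2, rhs2] at h
    exact h
  have hsu : fderiv ℝ (D1 u) p ((0:ℝ), (1:ℝ)) = fderiv ℝ (D2 u) p ((1:ℝ), (0:ℝ)) :=
    symm_D hΩ hu hp
  have hsv : fderiv ℝ (D1 v) p ((0:ℝ), (1:ℝ)) = fderiv ℝ (D2 v) p ((1:ℝ), (0:ℝ)) :=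
    symm_D hΩ hv hp
  have hsf : fderiv ℝ (D1 f) p ((0:ℝ), (1:ℝ)) = fderiv ℝ (D2 f) p ((1:ℝ), (0:ℝ)) :=
    symm_D hΩ hf hp
  have hKGp : fderiv ℝ (D1 f) p ((1:ℝ), (0:ℝ)) - fderiv ℝ (D2 f) p ((0:ℝ), (1:ℝ)) =
      ν p * f p := by
    rw [← waveOp_fderiv hΩ hf hp]
    exact hKG p hp
  have eq1p := eq1' p hp
  have eq2p := eq2' p hp
  constructor
  · rw [waveOp_fderiv hΩ hu hp]
    have key1 : f p * (fderiv ℝ (D1 u) p ((1:ℝ), (0:ℝ)) -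
        fderiv ℝ (D2 u) p ((0:ℝ), (1:ℝ))) = f p * (ν p * u p) := by
      linear_combination hA + hB - f p * hsv + u p * hKGp - v p * hsf
    exact mul_left_cancel₀ hf0 key1
  · rw [waveOp_fderiv hΩ hv hp, pdx_fderiv dfp, pdt_fderiv dfp]
    have key2 : (f p) ^ 2 * (fderiv ℝ (D1 v) p ((1:ℝ), (0:ℝ)) -
        fderiv ℝ (D2 v) p ((0:ℝ), (1:ℝ))) =
        (-(ν p) * (f p) ^ 2 + 2 * ((D1 f p) ^ 2 - (D2 f p) ^ 2)) * v p := by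
      linear_combination f p * hC + f p * hD - 2 * D1 f p * eq2p - 2 * D2 f p * eq1p -
        (f p) ^ 2 * hsu - f p * v p * hKGp + f p * u p * hsf
    field_simp
    linear_combination key2

/-- if `f > 0` is a C² solution of `□f = νf` and `W = u + jv ∈ C²(Ω)` solves
the main Vekua equation `W_z̄ = (f_z̄/f)W̄`, then `u = Re W` solves `□u = νu` and
`v = Im W` solves `□v = ηv` with `η = −ν + 8|f_z|²/f² = −ν + 2(f_x² − f_t²)/f²`. -/
theorem mainVekua_re_im_solve_kleinGordon (Ω : Set Hyp) (hΩ : IsOpen Ω) (ν f : Hyp → ℝ)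
    (hf : ContDiffOn ℝ 2 f Ω) (hfpos : ∀ p ∈ Ω, 0 < f p)
    (hKG : ∀ p ∈ Ω, waveOp f p = ν p * f p)
    (W : Hyp → Hyp) (hW : ContDiffOn ℝ 2 W Ω)
    (hMainVekua : ∀ p ∈ Ω, dzbar W p = hmul (hdiv (rzbar f p) (f p, 0)) (hconj (W p))) :
    ∀ p ∈ Ω,
      waveOp (fun q => (W q).1) p = ν p * (W p).1 ∧
      waveOp (fun q => (W q).2) p =
        (-ν p + 2 * ((pdx f p) ^ 2 - (pdt f p) ^ 2) / (f p) ^ 2) * (W p).2 := by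
  intro p hp
  refine keyLemma Ω hΩ ν f (fun q => (W q).1) (fun q => (W q).2) hf hfpos hKG
    (contDiff_fst.comp_contDiffOn hW) (contDiff_snd.comp_contDiffOn hW) ?_ ?_ hp
  · intro q hq
    have h := hMainVekua q hq
    have hne : f q ≠ 0 := (hfpos q hq).ne'
    simp only [dzbar, hdiv, hmul, hinv, rzbar, hconj, Prod.mk.injEq] at h
    obtain ⟨h1, h2⟩ := h
    field_simp at h1
    beta_reduce
    refine mul_left_cancel₀ hne ?_
    linear_combination h1
  · intro q hq
    have h := hMainVekua q hq
    have hne : f q ≠ 0 := (hfpos q hq).ne'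
    simp only [dzbar, hdiv, hmul, hinv, rzbar, hconj, Prod.mk.injEq] at h
    obtain ⟨h1, h2⟩ := h
    field_simp at h2
    beta_reduce
    refine mul_left_cancel₀ (pow_ne_zero 3 hne) ?_
    linear_combination f q ^ 2 * h2
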